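/- Let n, t be positive integers, let α ≥ 0, and let F ∈ ℂ^{n×n} be a unitary matrix all of whose entries satisfy |F_{ij}| ≤ α. Let x̂ ∈ ℂ^n, let e, e' ∈ ℂ^n both be t-sparse, let y = F^{-1}x̂ + e, and let z = F(y − e'). Then ‖x̂ − z‖_∞ ≤ α·√(2t)·‖e' − e‖₂. -/

import Mathlib

/-- The Euclidean (ℓ2) norm of a complex vector. -/
noncomputable def l2norm {n : ℕ} (x : Fin n → ℂ) : ℝ :=
  Real.sqrt (∑ i, ‖x i‖ ^ 2)

/-- A vector is `t`-sparse if at most `t` of its entries are nonzero. -/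
def Sparse {n : ℕ} (t : ℕ) (x : Fin n → ℂ) : Prop :=
  (Finset.univ.filter (fun i => x i ≠ 0)).card ≤ t

/-- Key ℓ∞ estimate in the proof of the Main Theorem: with `y = F⁻¹x̂ + e` and
`z = F(y − e')`, the difference `x̂ − z = F(e' − e)` is the image of a `2t`-sparse
vector, so `‖x̂ − z‖_∞ ≤ α·√(2t)·‖e' − e‖₂`. Here `F⁻¹ = Fᴴ`. -/
theorem linfty_estimate
    (n t : ℕ) (hn : 0 < n) (ht : 0 < t) (α : ℝ) (hα : 0 ≤ α)
    (F : Matrix (Fin n) (Fin n) ℂ)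
    (hFunit : F * F.conjTranspose = 1 ∧ F.conjTranspose * F = 1)
    (hF : ∀ i j, ‖F i j‖ ≤ α)
    (xhat : Fin n → ℂ)
    (e e' : Fin n → ℂ) (he : Sparse t e) (he' : Sparse t e')
    (y : Fin n → ℂ) (hy : y = F.conjTranspose.mulVec xhat + e)
    (z : Fin n → ℂ) (hz : z = F.mulVec (y - e')) :
    ∀ i, ‖(xhat - z) i‖ ≤ α * Real.sqrt (2 * t) * l2norm (e' - e) := by
  intro i
  set v : Fin n → ℂ := e' - e with hv
  have hdiff : xhat - z = F.mulVec v := by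
    have h1 : F.mulVec (F.conjTranspose.mulVec xhat) = xhat := by
      rw [Matrix.mulVec_mulVec, hFunit.1, Matrix.one_mulVec]
    rw [hz, hy]
    have : F.conjTranspose.mulVec xhat + e - e' =
        F.conjTranspose.mulVec xhat - v := by
      funext j; simp [hv]; ring
    rw [this, Matrix.mulVec_sub, h1]
    funext j; simp [hv]
  rw [hdiff]
  set S : Finset (Fin n) := Finset.univ.filter (fun j => v j ≠ 0) with hS
  have hScard : (S.card : ℝ) ≤ 2 * t := by
    have hsub : S ⊆ (Finset.univ.filter (fun j => e' j ≠ 0)) ∪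
        (Finset.univ.filter (fun j => e j ≠ 0)) := by
      intro j hj
      simp only [hS, Finset.mem_filter, Finset.mem_union, Finset.mem_univ, true_and] at *
      by_contra hc
      push_neg at hc
      apply hj
      show (e' - e) j = 0
      simp [hc.1, hc.2]
    have := (Finset.card_le_card hsub).trans (Finset.card_union_le _ _)
    have h2 := this.trans (Nat.add_le_add he' he)
    calc (S.card : ℝ) ≤ ((t + t : ℕ) : ℝ) := by exact_mod_cast h2
      _ = 2 * t := by push_cast; ring
  -- step 1: triangle inequality and restrict to support
  have step1 : ‖F.mulVec v i‖ ≤ α * ∑ j ∈ S, ‖v j‖ := by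
    calc ‖F.mulVec v i‖ ≤ ∑ j, ‖F i j * v j‖ := by
          exact norm_sum_le (E := ℂ) _ _
      _ = ∑ j ∈ S, ‖F i j‖ * ‖v j‖ := by
          rw [Finset.sum_filter]
          apply Finset.sum_congr rfl
          intro j _
          by_cases h : v j = 0 <;> simp [h, map_mul]
      _ ≤ ∑ j ∈ S, α * ‖v j‖ := by
          apply Finset.sum_le_sum
          intro j _
          exact mul_le_mul_of_nonneg_right (hF i j) (norm_nonneg _)
      _ = α * ∑ j ∈ S, ‖v j‖ := by rw [Finset.mul_sum]
  -- step 2: Cauchy-Schwarz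
  have step2 : ∑ j ∈ S, ‖v j‖ ≤ Real.sqrt (2 * t) * l2norm v := by
    have hcs : (∑ j ∈ S, ‖v j‖) ^ 2 ≤
        (S.card : ℝ) * ∑ j ∈ S, ‖v j‖ ^ 2 := by
      exact sq_sum_le_card_mul_sum_sq
    have hsum_le : ∑ j ∈ S, ‖v j‖ ^ 2 ≤ ∑ j, ‖v j‖ ^ 2 := by
      apply Finset.sum_le_sum_of_subset_of_nonneg (Finset.subset_univ S)
      intro j _ _; positivity
    have h0 : 0 ≤ ∑ j ∈ S, ‖v j‖ := Finset.sum_nonneg fun j _ => norm_nonneg _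
    have := Real.sqrt_le_sqrt hcs
    rw [Real.sqrt_sq h0] at this
    refine this.trans ?_
    rw [Real.sqrt_mul (Nat.cast_nonneg _)]
    unfold l2norm
    gcongr
  calc ‖F.mulVec v i‖ ≤ α * ∑ j ∈ S, ‖v j‖ := step1
    _ ≤ α * (Real.sqrt (2 * t) * l2norm v) := mul_le_mul_of_nonneg_left step2 hα
    _ = α * Real.sqrt (2 * t) * l2norm v := by ring
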